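/- No subgroup H of infinite index in a group G is equivalent to an absorbing set: for every finite subset F of G, the set FH is not absorbing, i.e., there exists a finite S ⊆ G such that ⋂_{s ∈ S} sFH = ∅. -/
import Mathlib


open scoped Pointwise

/-- Since `H` has infinite index, all its conjugates do too, so finitely many
cosets of conjugates cannot cover `G`. -/
lemma aux_avoid {G : Type*} [Group G] (H : Subgroup G) (hH : H.index = 0)
    (T F : Finset G) :
    ∃ g : G, ∀ s ∈ T, ∀ f ∈ F, f⁻¹ * s⁻¹ * g * f ∉ H := by
  classical
  by_contra hcon
  push_neg at hcon
  set K : G × G → Subgroup G := fun p => H.map (MulAut.conj p.2).toMonoidHom with hK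
  have hcover : ⋃ p ∈ T ×ˢ F, (p.1 : G) • (K p : Set G) = Set.univ := by
    rw [Set.eq_univ_iff_forall]
    intro g
    obtain ⟨s, hs, f, hf, hm⟩ := hcon g
    refine Set.mem_biUnion (Finset.mk_mem_product hs hf) ?_
    rw [mem_leftCoset_iff]
    refine ⟨f⁻¹ * s⁻¹ * g * f, hm, ?_⟩
    simp [MulAut.conj_apply]
    group
  obtain ⟨p, _, hfin⟩ := Subgroup.exists_finiteIndex_of_leftCoset_cover hcover
  have : (K p).index = H.index := by
    refine Subgroup.index_map_eq H (MulEquiv.surjective _) ?_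
    rw [(MulAut.conj p.2).toMonoidHom.ker_eq_bot_iff.mpr (MulEquiv.injective _)]
    exact bot_le
  exact hfin.index_ne_zero (by rw [this, hH])

lemma aux_build {G : Type*} [Group G] (H : Subgroup G) (hH : H.index = 0)
    (F : Finset G) (hF : F.Nonempty) : ∀ n : ℕ, ∃ T : Finset G, T.card = n ∧
      ∀ s ∈ T, ∀ t ∈ T, s ≠ t → ∀ f ∈ F, f⁻¹ * s⁻¹ * t * f ∉ H := by
  classical
  intro n
  induction n with
  | zero => exact ⟨∅, rfl, by simp⟩
  | succ n ih =>
    obtain ⟨T, hcard, hprop⟩ := ih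
    obtain ⟨g, hg⟩ := aux_avoid H hH T F
    obtain ⟨f, hf⟩ := hF
    have hgT : g ∉ T := fun hmem => hg g hmem f hf (by simpa using H.one_mem)
    refine ⟨insert g T, by rw [Finset.card_insert_of_notMem hgT, hcard], ?_⟩
    intro s hs t ht hne f hf hmem
    rcases Finset.mem_insert.mp hs with hsg | hsT
    · rcases Finset.mem_insert.mp ht with htg | htT
      · exact hne (hsg.trans htg.symm)
      · apply hg t htT f hf
        have h2 := H.inv_mem hmem
        rw [hsg] at h2
        simpa [mul_assoc] using h2
    · rcases Finset.mem_insert.mp ht with htg | htT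
      · apply hg s hsT f hf
        rwa [htg] at hmem
      · exact hprop s hsT t htT hne f hf hmem

theorem stmt15 {G : Type*} [Group G] (H : Subgroup G) (hH : H.index = 0)
    (F : Finset G) :
    ∃ S : Finset G, (⋂ s ∈ S, (s * ·) '' ((F : Set G) * (H : Set G))) = ∅ := by
  classical
  rcases Finset.eq_empty_or_nonempty F with rfl | hF
  · exact ⟨{1}, by simp⟩
  obtain ⟨T, hcard, hprop⟩ := aux_build H hH F hF (F.card + 1)
  refine ⟨T, Set.eq_empty_iff_forall_notMem.mpr fun x hx => ?_⟩
  simp only [Set.mem_iInter] at hx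
  -- for each s ∈ T pick f s ∈ F with (s * f s)⁻¹ * x ∈ H
  have hchoice : ∀ s ∈ T, ∃ f ∈ F, f⁻¹ * s⁻¹ * x ∈ H := by
    intro s hs
    obtain ⟨y, hy, hxy⟩ := hx s hs
    obtain ⟨f, hf, h, hh, rfl⟩ := hy
    refine ⟨f, hf, ?_⟩
    have : x = s * (f * h) := hxy.symm
    rw [this]
    simpa [mul_assoc] using hh
  choose! φ hφF hφH using hchoice
  have hcardlt : F.card < T.card := by rw [hcard]; omega
  have : ¬ Set.InjOn φ T := by
    intro hinj
    have := Finset.card_le_card_of_injOn φ (fun a ha => hφF a ha) hinj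
    omega
  rw [Set.InjOn] at this
  push_neg at this
  obtain ⟨s, hs, t, ht, hfe, hne⟩ := this
  apply hprop s hs t ht hne (φ s) (hφF s hs)
  have h1 := hφH s hs
  have h2 := hφH t ht
  rw [hfe] at h1
  have := H.mul_mem h1 (H.inv_mem h2)
  have he : (φ t)⁻¹ * s⁻¹ * x * ((φ t)⁻¹ * t⁻¹ * x)⁻¹ = (φ t)⁻¹ * s⁻¹ * t * (φ t) := by
    group
  rw [he] at this
  rwa [hfe]
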